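/- Every element of the Booleanization D⁻ of a finite distributive lattice D can be written as a difference chain a₁ \ (a₂ \ (… \ (a_{2m-1} \ a_{2m})…)) with a₁ ≥ a₂ ≥ … ≥ a_{2m} elements of D. -/

import Mathlib

/-- The right-nested iterated difference `a₁ \ (a₂ \ (… \ (aₙ₋₁ \ aₙ)…))` of a list. -/
def iterDiff {B : Type*} [BooleanAlgebra B] : List B → B
  | [] => ⊥
  | [x] => x
  | x :: y :: xs => x \ iterDiff (y :: xs)

section Aux

variable {B : Type*} [BooleanAlgebra B]

/-- Sum of pairwise layers of a list: `(a₁ \ a₂) ⊔ (a₃ \ a₄) ⊔ …`. -/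
def layersAux : List B → B
  | [] => ⊥
  | [x] => x
  | x :: y :: xs => (x \ y) ⊔ layersAux xs

theorem iterDiff_le_head (x : B) (L : List B) : iterDiff (x :: L) ≤ x := by
  cases L with
  | nil => simp [iterDiff]
  | cons y ys => simp only [iterDiff]; exact sdiff_le

theorem iterDiff_eq_layersAux :
    ∀ (L : List B), L.Chain' (· ≥ ·) → Even L.length → iterDiff L = layersAux L
  | [], _, _ => rfl
  | [_], _, he => by simp at he
  | [x, y], _, _ => by simp [iterDiff, layersAux]
  | x :: y :: z :: xs, hc, he => by
    have hxy : y ≤ x := hc.rel_head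
    have hc' := hc.tail
    have hyz : z ≤ y := hc'.rel_head
    have hc'' := hc'.tail
    have he' : Even (z :: xs).length := by
      obtain ⟨k, hk⟩ := he
      refine ⟨k - 1, ?_⟩
      simp only [List.length_cons] at hk ⊢
      omega
    have ih := iterDiff_eq_layersAux (z :: xs) hc'' he'
    have ht : iterDiff (z :: xs) ≤ z := iterDiff_le_head z xs
    show x \ iterDiff (y :: z :: xs) = (x \ y) ⊔ layersAux (z :: xs)
    have h1 : iterDiff (y :: z :: xs) = y \ iterDiff (z :: xs) := rfl
    rw [h1, sdiff_sdiff_eq_sdiff_sup ((ht.trans hyz).trans hxy), ih]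

/-- Merge a single difference `u \ v` into a difference chain. -/
def mergeChain (u v : B) : List B → List B
  | [] => [u, u ⊓ v]
  | [x] => [x]
  | a :: b :: xs => (a ⊔ u) :: ((b ⊔ u) ⊓ (a ⊔ v)) :: mergeChain (a ⊓ u) (b ⊓ v) xs

/-- The key Boolean-algebra identity for one merge step. -/
theorem merge_step (a b u v : B) :
    ((a ⊔ u) \ ((b ⊔ u) ⊓ (a ⊔ v))) ⊔ ((a ⊓ u) \ (b ⊓ v)) = (u \ v) ⊔ (a \ b) := by
  have h1 : (a ⊔ u) \ ((b ⊔ u) ⊓ (a ⊔ v)) = ((a \ b) \ u) ⊔ ((u \ v) \ a) := by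
    rw [sdiff_inf, sup_sdiff, sup_sdiff]
    have e1 : u \ (b ⊔ u) = ⊥ := sdiff_eq_bot_iff.2 le_sup_right
    have e2 : a \ (a ⊔ v) = ⊥ := sdiff_eq_bot_iff.2 le_sup_left
    rw [e1, e2, sup_bot_eq, bot_sup_eq, sdiff_sdiff_left, sup_comm a v, sdiff_sdiff_left]
  have h2a : (a ⊓ u) \ b = u ⊓ (a \ b) := by rw [inf_comm a u, inf_sdiff_assoc]
  have h2b : (a ⊓ u) \ v = a ⊓ (u \ v) := inf_sdiff_assoc a u v
  have h2 : (a ⊓ u) \ (b ⊓ v) = (u ⊓ (a \ b)) ⊔ (a ⊓ (u \ v)) := by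
    rw [sdiff_inf, h2a, h2b]
  rw [h1, h2]
  have h3 : ((a \ b) \ u) ⊔ (u ⊓ (a \ b)) = a \ b := by
    rw [inf_comm, sup_comm, sup_inf_sdiff]
  have h4 : ((u \ v) \ a) ⊔ (a ⊓ (u \ v)) = u \ v := by
    rw [inf_comm, sup_comm, sup_inf_sdiff]
  calc ((a \ b) \ u ⊔ (u \ v) \ a) ⊔ (u ⊓ (a \ b) ⊔ a ⊓ (u \ v))
      = (((a \ b) \ u) ⊔ (u ⊓ (a \ b))) ⊔ (((u \ v) \ a) ⊔ (a ⊓ (u \ v))) := by ac_rfl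
    _ = (u \ v) ⊔ (a \ b) := by rw [h3, h4, sup_comm]

theorem layersAux_mergeChain (u v : B) :
    ∀ (L : List B), Even L.length →
      layersAux (mergeChain u v L) = (u \ v) ⊔ layersAux L
  | [], _ => by
    show (u \ (u ⊓ v)) ⊔ ⊥ = (u \ v) ⊔ ⊥
    rw [sdiff_inf_self_left]
  | [_], he => by simp at he
  | a :: b :: xs, he => by
    have he' : Even xs.length := by
      obtain ⟨k, hk⟩ := he
      refine ⟨k - 1, ?_⟩
      simp only [List.length_cons] at hk ⊢
      omega
    show ((a ⊔ u) \ ((b ⊔ u) ⊓ (a ⊔ v))) ⊔ layersAux (mergeChain (a ⊓ u) (b ⊓ v) xs)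
        = (u \ v) ⊔ ((a \ b) ⊔ layersAux xs)
    rw [layersAux_mergeChain (a ⊓ u) (b ⊓ v) xs he', ← sup_assoc, merge_step, sup_assoc]

theorem mergeChain_mem {D : Set B} (hinf : ∀ a ∈ D, ∀ b ∈ D, a ⊓ b ∈ D)
    (hsup : ∀ a ∈ D, ∀ b ∈ D, a ⊔ b ∈ D) :
    ∀ (u v : B), u ∈ D → v ∈ D → ∀ (L : List B), (∀ x ∈ L, x ∈ D) →
      ∀ x ∈ mergeChain u v L, x ∈ D
  | u, v, hu, hv, [], _ => by
    intro x hx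
    have : x ∈ [u, u ⊓ v] := hx
    simp only [List.mem_cons, List.not_mem_nil, or_false] at this
    rcases this with rfl | rfl
    exacts [hu, hinf u hu v hv]
  | u, v, hu, hv, [y], hL => by
    intro x hx
    have h : x ∈ [y] := hx
    rw [List.mem_singleton] at h
    exact h ▸ hL y (by simp)
  | u, v, hu, hv, a :: b :: xs, hL => by
    have ha : a ∈ D := hL a (by simp)
    have hb : b ∈ D := hL b (by simp)
    intro x hx
    have : x ∈ (a ⊔ u) :: ((b ⊔ u) ⊓ (a ⊔ v)) :: mergeChain (a ⊓ u) (b ⊓ v) xs := hx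
    simp only [List.mem_cons] at this
    rcases this with rfl | rfl | h
    · exact hsup a ha u hu
    · exact hinf _ (hsup b hb u hu) _ (hsup a ha v hv)
    · exact mergeChain_mem hinf hsup (a ⊓ u) (b ⊓ v) (hinf a ha u hu) (hinf b hb v hv)
        xs (fun y hy => hL y (by simp [hy])) x h

theorem mergeChain_head_le (u v w : B) (hu : u ≤ w) :
    ∀ (L : List B), (∀ x ∈ L.head?, x ≤ w) →
      ∀ x ∈ (mergeChain u v L).head?, x ≤ w
  | [], _ => by
    intro x hx
    have : x ∈ ([u, u ⊓ v] : List B).head? := hx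
    simp only [List.head?, Option.mem_def, Option.some.injEq] at this
    subst this
    exact hu
  | [y], hL => by
    intro x hx
    have : x ∈ ([y] : List B).head? := hx
    simp only [List.head?, Option.mem_def, Option.some.injEq] at this
    subst this
    exact hL y rfl
  | a :: b :: xs, hL => by
    intro x hx
    have : x ∈ (((a ⊔ u) :: ((b ⊔ u) ⊓ (a ⊔ v)) :: mergeChain (a ⊓ u) (b ⊓ v) xs)).head? := hx
    simp only [List.head?, Option.mem_def, Option.some.injEq] at this
    subst this
    exact sup_le (hL a rfl) hu

theorem mergeChain_chain' :
    ∀ (u v : B), v ≤ u → ∀ (L : List B), L.Chain' (· ≥ ·) →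
      (mergeChain u v L).Chain' (· ≥ ·)
  | u, v, hvu, [], _ => by
    show ([u, u ⊓ v] : List B).Chain' (· ≥ ·)
    exact List.isChain_cons_cons.2 ⟨inf_le_left, List.isChain_singleton _⟩
  | u, v, hvu, [y], _ => by
    show ([y] : List B).Chain' (· ≥ ·)
    exact List.isChain_singleton _
  | u, v, hvu, a :: b :: xs, hc => by
    have hba : b ≤ a := hc.rel_head
    have hc' := hc.tail
    have hrec := mergeChain_chain' (a ⊓ u) (b ⊓ v) (inf_le_inf hba hvu) xs hc'.tail
    show (((a ⊔ u) :: ((b ⊔ u) ⊓ (a ⊔ v)) :: mergeChain (a ⊓ u) (b ⊓ v) xs)).Chain' (· ≥ ·)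
    refine List.isChain_cons_cons.2 ⟨?_, List.isChain_cons.2 ⟨?_, hrec⟩⟩
    · exact le_trans inf_le_left (sup_le_sup_right hba u)
    · intro x hx
      refine mergeChain_head_le (a ⊓ u) (b ⊓ v) ((b ⊔ u) ⊓ (a ⊔ v)) ?_ xs ?_ x hx
      · exact le_inf (le_trans inf_le_right le_sup_right) (le_trans inf_le_left le_sup_left)
      · intro y hy
        have hby : b ≥ y := hc'.rel_head? hy
        exact le_inf (le_trans hby le_sup_left) (le_trans (hby.trans hba) le_sup_left)

theorem mergeChain_even (u v : B) :
    ∀ (L : List B), Even L.length → Even (mergeChain u v L).length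
  | [], _ => by
    show Even ([u, u ⊓ v] : List B).length
    simp
  | [_], he => by simp at he
  | a :: b :: xs, he => by
    have he' : Even xs.length := by
      obtain ⟨k, hk⟩ := he
      refine ⟨k - 1, ?_⟩
      simp only [List.length_cons] at hk ⊢
      omega
    obtain ⟨k, hk⟩ := mergeChain_even (a ⊓ u) (b ⊓ v) xs he'
    show Even (((a ⊔ u) :: ((b ⊔ u) ⊓ (a ⊔ v)) :: mergeChain (a ⊓ u) (b ⊓ v) xs)).length
    refine ⟨k + 1, ?_⟩
    simp only [List.length_cons]
    omega

end Aux

/-- Every element of the Booleanization `B = D⁻` of a finite distributive lattice `D`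
(a finite bounded sublattice of `B` generating `B` as a Boolean algebra) can be written
as a difference chain `a₁ \ (a₂ \ (… \ (a₂ₘ₋₁ \ a₂ₘ)…))` with `a₁ ≥ … ≥ a₂ₘ` in `D`. -/
theorem stmt14 {B : Type*} [BooleanAlgebra B] (D : Set B) (hfin : D.Finite)
    (hbot : ⊥ ∈ D) (htop : ⊤ ∈ D)
    (hinf : ∀ a ∈ D, ∀ b ∈ D, a ⊓ b ∈ D) (hsup : ∀ a ∈ D, ∀ b ∈ D, a ⊔ b ∈ D)
    (hgen : ∀ b : B, ∃ (n : ℕ) (u v : Fin n → B),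
      (∀ i, u i ∈ D ∧ v i ∈ D) ∧ b = (Finset.univ : Finset (Fin n)).sup (fun i => u i \ v i)) :
    ∀ b : B, ∃ (m : ℕ) (a : Fin (2 * m) → B),
      (∀ i, a i ∈ D) ∧ Antitone a ∧ b = iterDiff (List.ofFn a) := by
  intro b
  obtain ⟨n, u, v, huv, hb⟩ := hgen b
  -- build the chain list by merging the differences one by one
  have key : ∀ s : Finset (Fin n), ∃ L : List B,
      (∀ x ∈ L, x ∈ D) ∧ L.Chain' (· ≥ ·) ∧ Even L.length ∧
        s.sup (fun i => u i \ v i) = layersAux L := by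
    intro s
    induction s using Finset.induction_on with
    | empty => exact ⟨[], by simp, List.isChain_nil, by simp, by simp [layersAux]⟩
    | @insert i s hi ih =>
      obtain ⟨L, hmem, hchain, heven, hval⟩ := ih
      refine ⟨mergeChain (u i) (u i ⊓ v i) L, ?_, ?_, ?_, ?_⟩
      · exact mergeChain_mem hinf hsup (u i) (u i ⊓ v i) (huv i).1
          (hinf _ (huv i).1 _ (huv i).2) L hmem
      · exact mergeChain_chain' (u i) (u i ⊓ v i) inf_le_left L hchain
      · exact mergeChain_even _ _ L heven
      · rw [Finset.sup_insert, layersAux_mergeChain _ _ L heven, ← hval,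
          sdiff_inf_self_left]
  obtain ⟨L, hmem, hchain, heven, hval⟩ := key Finset.univ
  obtain ⟨m, hm⟩ := heven
  have hlen : L.length = 2 * m := by omega
  refine ⟨m, fun i => L.get (Fin.cast hlen.symm i), ?_, ?_, ?_⟩
  · intro i
    exact hmem _ (L.get_mem (Fin.cast hlen.symm i))
  · have hpw : L.Pairwise (· ≥ ·) := List.isChain_iff_pairwise.1 hchain
    rw [List.pairwise_iff_get] at hpw
    intro i j hij
    rcases lt_or_eq_of_le hij with h | h
    · exact hpw _ _ (by simpa using h)
    · exact le_of_eq (by rw [h])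
  · have : List.ofFn (fun i : Fin (2 * m) => L.get (Fin.cast hlen.symm i)) = L := by
      apply List.ext_get
      · simp [hlen]
      · intro k h1 h2
        simp [List.get_ofFn]
    rw [this, iterDiff_eq_layersAux L hchain ⟨m, hm⟩, ← hval, hb]
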